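/- Let p be an odd prime. For every a ∈ 𝔽_p with a ≠ 0, γ_p(a) = −a·γ_p(a^{-1}) in 𝔽_p. -/

import Mathlib

def mirimanoff (p : ℕ) (t : ZMod p) : ZMod p :=
  ∑ j ∈ Finset.Icc 1 (p - 1), (j : ZMod p)⁻¹ * t ^ j

theorem mirimanoff_inv (p : ℕ) (hp : p.Prime) (hodd : Odd p)
    (a : ZMod p) (ha : a ≠ 0) :
    mirimanoff p a = -a * mirimanoff p a⁻¹ := by
  have : Fact p.Prime := ⟨hp⟩
  have h1 : 1 < p := hp.one_lt
  unfold mirimanoff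
  rw [neg_mul, Finset.mul_sum, ← Finset.sum_neg_distrib]
  refine Finset.sum_nbij' (fun j => p - j) (fun j => p - j) ?_ ?_ ?_ ?_ ?_
  · intro j hj; simp only [Finset.mem_Icc] at *; omega
  · intro j hj; simp only [Finset.mem_Icc] at *; omega
  · intro j hj; simp only [Finset.mem_Icc] at *; omega
  · intro j hj; simp only [Finset.mem_Icc] at *; omega
  · intro j hj
    simp only [Finset.mem_Icc] at hj
    have hjp : j ≤ p := by omega
    have hinv : a⁻¹ ≠ 0 := inv_ne_zero ha
    have hc : ((p - j : ℕ) : ZMod p) = -(j : ℕ) := by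
      push_cast [Nat.cast_sub hjp]; simp
    rw [hc, pow_sub₀ a⁻¹ hinv hjp, ZMod.pow_card, inv_pow, inv_inv, inv_neg]
    field_simp
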